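/- Let N ≥ 8 be an integer divisible by 4 and let b_1 be a nonzero real number. Define b ∈ ℝ^{N/2} by b_r = b_1 sin²(π/N)/sin²(rπ/N) for 1 ≤ r ≤ N/2 − 1 and b_{N/2} = (b_1/2) sin²(π/N). Then ψ^{(i,j,k,l)}(b) = 0 for all integers i, j, k, l with −N/2 + 1 ≤ i, j, k, l ≤ N/2 − 1 and i + j + k + l = N or i + j + k + l = −N. (Consequently the quartic asymmetric part Φ_a of the long-range lattice Hamiltonian with coupling coefficients b_r vanishes identically, i.e., the lattice is a symmetric lattice.) -/

import Mathlib

/-- `c_α = cos(απ/N)` -/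
noncomputable def cc (N : ℕ) (a : ℤ) : ℝ := Real.cos (a * Real.pi / N)

/-- `s_α = sin(απ/N)` -/
noncomputable def ss (N : ℕ) (a : ℤ) : ℝ := Real.sin (a * Real.pi / N)

/-- `f_q^{(i,j,k,l)}` -/
noncomputable def ff (N : ℕ) (i j k l : ℤ) (q : ℕ) : ℝ :=
  if Odd q then cc N (i * q) * cc N (j * q) * cc N (k * q) * cc N (l * q)
  else ss N (i * q) * ss N (j * q) * ss N (k * q) * ss N (l * q)

/-- `ψ^{(i,j,k,l)}(b)` -/
noncomputable def psi (N : ℕ) (b : Fin (N / 2) → ℝ) (i j k l : ℤ) : ℝ :=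
  -∑ q : Fin (N / 2), (-1 : ℝ) ^ ((q : ℕ) + 1) * b q * ff N i j k l ((q : ℕ) + 1)

/-- The explicit solution: `b_r = b₁ sin²(π/N)/sin²(rπ/N)` for `1 ≤ r ≤ N/2 − 1`
and `b_{N/2} = (b₁/2) sin²(π/N)`; the vector is 0-indexed (`b ⟨0,_⟩` is `b_1`). -/
noncomputable def bsol (N : ℕ) (b1 : ℝ) : Fin (N / 2) → ℝ := fun r =>
  if (r : ℕ) + 1 = N / 2 then b1 / 2 * Real.sin (Real.pi / N) ^ 2
  else b1 * Real.sin (Real.pi / N) ^ 2 / Real.sin (((r : ℕ) + 1) * Real.pi / N) ^ 2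


section Helpers
open Real Finset

lemma cos_sum_range (N u : ℕ) (h1 : 0 < u) (h2 : u < N) :
    ∑ q ∈ Finset.range N, Real.cos (2 * u * q * π / N) = 0 := by
  have hN0 : (N:ℝ) ≠ 0 := Nat.cast_ne_zero.mpr (by omega)
  set θ : ℝ := 2 * π * u / N with hθ
  have hθpos : 0 < θ := by
    apply div_pos (by positivity) (by positivity)
  have hθlt : θ < 2 * π := by
    rw [hθ, div_lt_iff₀ (by positivity : (0:ℝ) < N)]
    have : (u:ℝ) < N := by exact_mod_cast h2
    nlinarith [Real.pi_pos]
  set z : ℂ := Complex.exp (θ * Complex.I) with hz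
  have hre : ∀ q : ℕ, Real.cos (2 * u * q * π / N) = (z ^ q).re := by
    intro q
    rw [hz, ← Complex.exp_nat_mul]
    have : (q : ℂ) * (θ * Complex.I) = ((q * θ : ℝ) : ℂ) * Complex.I := by
      push_cast; ring
    rw [this, Complex.exp_ofReal_mul_I_re]
    congr 1
    rw [hθ]; field_simp
  have hz1 : z ≠ 1 := by
    intro h
    have : Real.cos θ = 1 := by
      have := congrArg Complex.re h
      rwa [hz, Complex.exp_ofReal_mul_I_re] at this
    rw [Real.cos_eq_one_iff_of_lt_of_lt (by linarith) hθlt] at this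
    exact absurd this (ne_of_gt hθpos)
  have hzN : z ^ N = 1 := by
    rw [hz, ← Complex.exp_nat_mul]
    have : (N : ℂ) * (θ * Complex.I) = (u : ℤ) * (2 * π * Complex.I) := by
      rw [hθ]; push_cast
      have hNC : (N:ℂ) ≠ 0 := Nat.cast_ne_zero.mpr (by omega)
      field_simp
    rw [this, Complex.exp_int_mul_two_pi_mul_I]
  have hsum : ∑ q ∈ Finset.range N, z ^ q = 0 := by
    rw [geom_sum_eq hz1, hzN]
    simp
  calc ∑ q ∈ Finset.range N, Real.cos (2 * u * q * π / N)
      = ∑ q ∈ Finset.range N, (z ^ q).re := by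
        exact Finset.sum_congr rfl fun q _ => hre q
    _ = (∑ q ∈ Finset.range N, z ^ q).re := by rw [Complex.re_sum]
    _ = 0 := by rw [hsum]; rfl

lemma cos_sum_Ico (N u : ℕ) (h1 : 0 < u) (h2 : u < N) :
    ∑ q ∈ Finset.Ico 1 N, Real.cos (2 * u * q * π / N) = -1 := by
  have h := cos_sum_range N u h1 h2
  rw [Finset.range_eq_Ico, ← Finset.sum_Ico_consecutive _ (Nat.zero_le 1) (by omega)] at h
  have h0 : ∑ q ∈ Finset.Ico (0:ℕ) 1, Real.cos (2 * u * q * π / N) = 1 := by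
    simp
  linarith

lemma sin_sq_second_diff (a x : ℝ) :
    Real.sin (a + x) ^ 2 + Real.sin (a - x) ^ 2 - 2 * Real.sin a ^ 2
      = 2 * Real.cos (2 * a) * Real.sin x ^ 2 := by
  rw [Real.sin_add, Real.sin_sub, Real.cos_two_mul]
  linear_combination (2 * Real.sin a ^ 2) * (Real.sin_sq_add_cos_sq x)
    - (2 * Real.sin x ^ 2) * (Real.sin_sq_add_cos_sq a)

lemma sin_pos_Ico {N q : ℕ} (h1 : 1 ≤ q) (h2 : q < N) : 0 < Real.sin (q * π / N) := by
  have hq' : (0:ℝ) < q := by exact_mod_cast h1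
  have hqN : (q:ℝ) < N := by exact_mod_cast h2
  have hN' : (0:ℝ) < N := lt_trans hq' hqN
  apply Real.sin_pos_of_pos_of_lt_pi
  · exact div_pos (mul_pos hq' Real.pi_pos) hN'
  · rw [div_lt_iff₀ hN']
    nlinarith [Real.pi_pos]

lemma Hnat (N : ℕ) (hN : 2 ≤ N) : ∀ t : ℕ, t ≤ N →
    ∑ q ∈ Finset.Ico 1 N, Real.sin (t * q * π / N) ^ 2 / Real.sin (q * π / N) ^ 2
      = t * ((N:ℝ) - t) := by
  intro t
  induction t using Nat.strong_induction_on with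
  | _ t ih =>
    match t with
    | 0 => intro _; simp
    | 1 =>
      intro _
      have hone : ∀ q ∈ Finset.Ico 1 N,
          Real.sin ((1:ℕ) * q * π / N) ^ 2 / Real.sin (q * π / N) ^ 2 = 1 := by
        intro q hq
        rw [Finset.mem_Ico] at hq
        have hs := sin_pos_Ico hq.1 hq.2
        rw [Nat.cast_one, one_mul, div_self (by positivity)]
      rw [Finset.sum_congr rfl hone, Finset.sum_const, Nat.card_Ico, nsmul_eq_mul, mul_one]
      push_cast [Nat.cast_sub (by omega : 1 ≤ N)]
      ring
    | (t+2) =>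
      intro htN
      have h1 := ih (t+1) (by omega) (by omega)
      have h0 := ih t (by omega) (by omega)
      have hcos := cos_sum_Ico N (t+1) (by omega) (by omega)
      have key : ∀ q ∈ Finset.Ico 1 N,
          Real.sin ((t+2:ℕ) * q * π / N) ^ 2 / Real.sin (q * π / N) ^ 2
            = 2 * (Real.sin ((t+1:ℕ) * q * π / N) ^ 2 / Real.sin (q * π / N) ^ 2)
              - Real.sin ((t:ℕ) * q * π / N) ^ 2 / Real.sin (q * π / N) ^ 2
              + 2 * Real.cos (2 * (t+1:ℕ) * q * π / N) := by
        intro q hq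
        rw [Finset.mem_Ico] at hq
        have hs := sin_pos_Ico hq.1 hq.2
        have hd := sin_sq_second_diff ((t+1:ℕ) * q * π / N) (q * π / N)
        have e1 : ((t+1:ℕ) : ℝ) * q * π / N + q * π / N = (t+2:ℕ) * q * π / N := by
          push_cast; ring
        have e2 : ((t+1:ℕ) : ℝ) * q * π / N - q * π / N = (t:ℕ) * q * π / N := by
          push_cast; ring
        have e3 : 2 * (((t+1:ℕ):ℝ) * q * π / N) = 2 * ((t+1:ℕ):ℝ) * q * π / N := by ring
        rw [e1, e2, e3] at hd
        push_cast at hd ⊢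
        field_simp
        ring_nf at hd ⊢
        linear_combination hd
      rw [Finset.sum_congr rfl key]
      rw [Finset.sum_add_distrib, Finset.sum_sub_distrib, ← Finset.mul_sum, ← Finset.mul_sum]
      rw [h1, h0, hcos]
      push_cast
      ring

lemma lc_odd (A B C D : ℝ) (h1 : Real.sin (A+B+C+D) = 0) (h2 : Real.cos (A+B+C+D) = -1) :
    Real.cos A ^ 2 + Real.cos B ^ 2 + Real.cos C ^ 2 + Real.cos D ^ 2
      - Real.sin (A+B) ^ 2 - Real.sin (A+C) ^ 2 - Real.sin (A+D) ^ 2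
    = -4 * (Real.cos A * Real.cos B * Real.cos C * Real.cos D) := by
  have e1 : Real.cos D = -Real.cos (A+B+C) := by
    rw [show D = (A+B+C+D) - (A+B+C) by ring, Real.cos_sub, h1, h2]; ring
  have e2 : Real.sin D = Real.sin (A+B+C) := by
    rw [show D = (A+B+C+D) - (A+B+C) by ring, Real.sin_sub, h1, h2]; ring
  rw [show A+D = D+A by ring]
  simp only [Real.sin_add, Real.cos_add]
  rw [e1, e2]
  simp only [Real.sin_add, Real.cos_add]
  linear_combination
    ((-1)*Real.cos C^2 + (-1)*Real.cos B^2 + (-1)*Real.cos A^2*Real.cos B^2*Real.sin C^2 + (-2)*Real.cos A^2*Real.sin B*Real.cos B*Real.sin C*Real.cos C + (-1)*Real.cos A^2*Real.sin B^2*Real.cos C^2 + (-1)*Real.sin A^2*Real.cos B^2*Real.sin C^2 + (-2)*Real.sin A^2*Real.sin B*Real.cos B*Real.sin C*Real.cos C + (-1)*Real.sin A^2*Real.sin B^2*Real.cos C^2) * (Real.sin_sq_add_cos_sq A)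
    + ((-1)*Real.cos A^2 + (-1)*Real.cos A^2*Real.cos C^2 + (1)*Real.cos A^2*Real.sin C^2 + (2)*Real.sin A*Real.cos A*Real.sin C*Real.cos C) * (Real.sin_sq_add_cos_sq B)
    + ((-2)*Real.cos A^2*Real.cos B^2 + (2)*Real.sin A*Real.cos A*Real.sin B*Real.cos B) * (Real.sin_sq_add_cos_sq C)

lemma lc_even (A B C D : ℝ) (h1 : Real.sin (A+B+C+D) = 0) (h2 : Real.cos (A+B+C+D) = 1) :
    Real.sin A ^ 2 + Real.sin B ^ 2 + Real.sin C ^ 2 + Real.sin D ^ 2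
      - Real.sin (A+B) ^ 2 - Real.sin (A+C) ^ 2 - Real.sin (A+D) ^ 2
    = 4 * (Real.sin A * Real.sin B * Real.sin C * Real.sin D) := by
  have e1 : Real.cos D = Real.cos (A+B+C) := by
    rw [show D = (A+B+C+D) - (A+B+C) by ring, Real.cos_sub, h1, h2]; ring
  have e2 : Real.sin D = -Real.sin (A+B+C) := by
    rw [show D = (A+B+C+D) - (A+B+C) by ring, Real.sin_sub, h1, h2]; ring
  rw [show A+D = D+A by ring]
  simp only [Real.sin_add, Real.cos_add]
  rw [e1, e2]
  simp only [Real.sin_add, Real.cos_add]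
  linear_combination
    ((1) + (-1)*Real.cos C^2 + (-1)*Real.cos B^2 + (1)*Real.cos B^2*Real.cos C^2 + (-1)*Real.cos B^2*Real.sin C^2 + (-1)*Real.sin B^2*Real.cos C^2 + (-3)*Real.sin B^2*Real.sin C^2 + (-1)*Real.cos A^2*Real.cos B^2*Real.sin C^2 + (-2)*Real.cos A^2*Real.sin B*Real.cos B*Real.sin C*Real.cos C + (-1)*Real.cos A^2*Real.sin B^2*Real.cos C^2 + (-1)*Real.sin A^2*Real.cos B^2*Real.sin C^2 + (-2)*Real.sin A^2*Real.sin B*Real.cos B*Real.sin C*Real.cos C + (-1)*Real.sin A^2*Real.sin B^2*Real.cos C^2) * (Real.sin_sq_add_cos_sq A)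
    + ((1) + (-1)*Real.cos C^2 + (-3)*Real.sin C^2 + (-1)*Real.cos A^2 + (1)*Real.cos A^2*Real.cos C^2 + (3)*Real.cos A^2*Real.sin C^2 + (2)*Real.sin A*Real.cos A*Real.sin C*Real.cos C) * (Real.sin_sq_add_cos_sq B)
    + ((-2) + (2)*Real.cos B^2 + (2)*Real.cos A^2 + (-2)*Real.cos A^2*Real.cos B^2 + (2)*Real.sin A*Real.cos A*Real.sin B*Real.cos B) * (Real.sin_sq_add_cos_sq C)

lemma cos_nat_pi_sq (m : ℕ) : Real.cos ((m:ℝ) * π) ^ 2 = 1 := by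
  have h := Real.sin_sq_add_cos_sq ((m:ℝ) * π)
  rw [Real.sin_nat_mul_pi] at h
  linarith

lemma Hint (N : ℕ) (hN : 2 ≤ N) (t : ℤ) (ht : t.natAbs ≤ N) :
    ∑ q ∈ Finset.Ico 1 N, Real.sin ((t:ℝ) * q * π / N) ^ 2 / Real.sin (q * π / N) ^ 2
      = (t.natAbs : ℝ) * ((N:ℝ) - t.natAbs) := by
  rw [← Hnat N hN t.natAbs ht]
  refine Finset.sum_congr rfl fun q _ => ?_
  rcases Int.natAbs_eq t with h | h
  · have h0 : 0 ≤ t := by rw [h]; exact Int.natCast_nonneg _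
    have h2 : (t:ℝ) = (t.natAbs:ℝ) := by
      rw [Nat.cast_natAbs]
      exact_mod_cast congrArg (Int.cast : ℤ → ℝ) (abs_of_nonneg h0).symm
    rw [h2]
  · have h0 : t ≤ 0 := by rw [h]; exact neg_nonpos.mpr (Int.natCast_nonneg _)
    have h2 : (t:ℝ) = -(t.natAbs:ℝ) := by
      rw [Nat.cast_natAbs, abs_of_nonpos h0]; push_cast; ring
    rw [h2, show -(t.natAbs:ℝ) * q * π / N = -((t.natAbs:ℝ) * q * π / N) by ring, Real.sin_neg]
    ring

lemma cospi_prod (N n : ℕ) (hNn : N = 2 * n) (i j k l : ℤ)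
    (hsum : i + j + k + l = (N:ℤ) ∨ i + j + k + l = -(N:ℤ)) :
    Real.cos ((i:ℝ) * π) * Real.cos ((j:ℝ) * π) * Real.cos ((k:ℝ) * π) * Real.cos ((l:ℝ) * π)
      = 1 := by
  have pair : ∀ a b : ℤ, Real.cos ((a:ℝ) * π) * Real.cos ((b:ℝ) * π)
      = Real.cos (((a + b : ℤ):ℝ) * π) := by
    intro a b
    push_cast
    rw [add_mul, Real.cos_add, Real.sin_int_mul_pi a, Real.sin_int_mul_pi b]
    ring
  rw [pair i j, pair (i+j) k, pair (i+j+k) l]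
  rcases hsum with h | h
  · rw [h]
    rw [show (((N:ℤ)):ℝ) * π = (n:ℝ) * (2 * π) by push_cast [hNn]; ring]
    exact Real.cos_nat_mul_two_pi n
  · rw [h]
    rw [show (((-(N:ℤ)):ℤ):ℝ) * π = -((n:ℝ) * (2 * π)) by push_cast [hNn]; ring]
    rw [Real.cos_neg]
    exact Real.cos_nat_mul_two_pi n

lemma ff_reflect (N n : ℕ) (hNn : N = 2 * n) (hn : 1 ≤ n) (i j k l : ℤ)
    (hsum : i + j + k + l = (N:ℤ) ∨ i + j + k + l = -(N:ℤ))
    (q : ℕ) (hq2 : q ≤ N) :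
    ff N i j k l (N - q) = ff N i j k l q := by
  have hN0 : (N:ℝ) ≠ 0 := Nat.cast_ne_zero.mpr (by omega)
  have hpar : Odd (N - q) ↔ Odd q := by
    rw [Nat.odd_sub hq2]
    simp only [Nat.odd_iff, Nat.even_iff]
    omega
  have hcos4 := cospi_prod N n hNn i j k l hsum
  have hfac : ∀ α : ℤ, (↑(α * ((N:ℕ) - q : ℕ)) : ℝ) * π / N
      = (α:ℝ) * π - (↑(α * (q:ℤ)) : ℝ) * π / N := by
    intro α
    push_cast [Nat.cast_sub hq2]
    field_simp
  by_cases hodd : Odd q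
  · rw [ff, ff, if_pos hodd, if_pos (hpar.mpr hodd)]
    simp only [cc]
    rw [hfac i, hfac j, hfac k, hfac l]
    rw [Real.cos_sub, Real.cos_sub, Real.cos_sub, Real.cos_sub]
    rw [Real.sin_int_mul_pi i, Real.sin_int_mul_pi j, Real.sin_int_mul_pi k,
      Real.sin_int_mul_pi l]
    linear_combination (Real.cos ((↑(i * (q:ℤ)):ℝ) * π / N) * Real.cos ((↑(j * (q:ℤ)):ℝ) * π / N)
      * Real.cos ((↑(k * (q:ℤ)):ℝ) * π / N) * Real.cos ((↑(l * (q:ℤ)):ℝ) * π / N)) * hcos4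
  · rw [ff, ff, if_neg hodd, if_neg (fun h => hodd (hpar.mp h))]
    simp only [ss]
    rw [hfac i, hfac j, hfac k, hfac l]
    rw [Real.sin_sub, Real.sin_sub, Real.sin_sub, Real.sin_sub]
    rw [Real.sin_int_mul_pi i, Real.sin_int_mul_pi j, Real.sin_int_mul_pi k,
      Real.sin_int_mul_pi l]
    linear_combination (Real.sin ((↑(i * (q:ℤ)):ℝ) * π / N) * Real.sin ((↑(j * (q:ℤ)):ℝ) * π / N)
      * Real.sin ((↑(k * (q:ℤ)):ℝ) * π / N) * Real.sin ((↑(l * (q:ℤ)):ℝ) * π / N)) * hcos4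

lemma point_q (N n : ℕ) (hNn : N = 2 * n) (hn : 1 ≤ n) (i j k l : ℤ)
    (hsum : i + j + k + l = (N:ℤ) ∨ i + j + k + l = -(N:ℤ)) (q : ℕ) :
    (-1:ℝ)^q * ff N i j k l q * 4
      = Real.sin ((((n:ℤ) - i : ℤ):ℝ) * q * π / N) ^ 2
      + Real.sin ((((n:ℤ) - j : ℤ):ℝ) * q * π / N) ^ 2
      + Real.sin ((((n:ℤ) - k : ℤ):ℝ) * q * π / N) ^ 2
      + Real.sin ((((n:ℤ) - l : ℤ):ℝ) * q * π / N) ^ 2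
      - Real.sin (((i + j : ℤ):ℝ) * q * π / N) ^ 2
      - Real.sin (((i + k : ℤ):ℝ) * q * π / N) ^ 2
      - Real.sin (((i + l : ℤ):ℝ) * q * π / N) ^ 2 := by
  have hN0 : (N:ℝ) ≠ 0 := Nat.cast_ne_zero.mpr (by omega)
  have hn0 : (n:ℝ) ≠ 0 := Nat.cast_ne_zero.mpr (by omega)
  have hNr : (N:ℝ) = 2 * n := by exact_mod_cast congrArg (Nat.cast : ℕ → ℝ) hNn
  have hargS : (↑(i * (q:ℤ)):ℝ) * π / N + (↑(j * (q:ℤ)):ℝ) * π / N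
      + (↑(k * (q:ℤ)):ℝ) * π / N + (↑(l * (q:ℤ)):ℝ) * π / N = (q:ℝ) * π
      ∨ (↑(i * (q:ℤ)):ℝ) * π / N + (↑(j * (q:ℤ)):ℝ) * π / N
      + (↑(k * (q:ℤ)):ℝ) * π / N + (↑(l * (q:ℤ)):ℝ) * π / N = -((q:ℝ) * π) := by
    rcases hsum with h | h
    · left
      have hr : (i:ℝ) + j + k + l = (N:ℝ) := by exact_mod_cast congrArg (Int.cast : ℤ → ℝ) h
      push_cast
      field_simp
      linear_combination (q:ℝ) * hr
    · right
      have hr : (i:ℝ) + j + k + l = -(N:ℝ) := by exact_mod_cast congrArg (Int.cast : ℤ → ℝ) h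
      push_cast
      field_simp
      linear_combination (q:ℝ) * hr
  have hsin : Real.sin ((↑(i * (q:ℤ)):ℝ) * π / N + (↑(j * (q:ℤ)):ℝ) * π / N
      + (↑(k * (q:ℤ)):ℝ) * π / N + (↑(l * (q:ℤ)):ℝ) * π / N) = 0 := by
    rcases hargS with h | h <;> rw [h]
    · exact Real.sin_nat_mul_pi q
    · rw [Real.sin_neg, Real.sin_nat_mul_pi q, neg_zero]
  have hBpt : ∀ α β : ℤ, Real.sin (((α + β : ℤ):ℝ) * q * π / N) ^ 2
      = Real.sin ((↑(α * (q:ℤ)):ℝ) * π / N + (↑(β * (q:ℤ)):ℝ) * π / N) ^ 2 := by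
    intro α β
    rw [show ((α + β : ℤ):ℝ) * q * π / N
      = (↑(α * (q:ℤ)):ℝ) * π / N + (↑(β * (q:ℤ)):ℝ) * π / N by push_cast; ring]
  rcases Nat.even_or_odd q with ⟨m, hm⟩ | ⟨m, hm⟩
  · -- even, q = m + m
    have hqr : (q:ℝ) = 2 * m := by rw [hm]; push_cast; ring
    have hcosq : Real.cos ((q:ℝ) * π) = 1 := by
      rw [hqr, show 2 * (m:ℝ) * π = (m:ℝ) * (2 * π) by ring]
      exact Real.cos_nat_mul_two_pi m
    have hcos : Real.cos ((↑(i * (q:ℤ)):ℝ) * π / N + (↑(j * (q:ℤ)):ℝ) * π / N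
        + (↑(k * (q:ℤ)):ℝ) * π / N + (↑(l * (q:ℤ)):ℝ) * π / N) = 1 := by
      rcases hargS with h | h <;> rw [h]
      · exact hcosq
      · rw [Real.cos_neg]; exact hcosq
    have hApt : ∀ α : ℤ, Real.sin ((((n:ℤ) - α : ℤ):ℝ) * q * π / N) ^ 2
        = Real.sin ((↑(α * (q:ℤ)):ℝ) * π / N) ^ 2 := by
      intro α
      have harg : (((n:ℤ) - α : ℤ):ℝ) * q * π / N
          = (m:ℝ) * π - (↑(α * (q:ℤ)):ℝ) * π / N := by
        push_cast
        rw [hqr, hNr]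
        field_simp
      rw [harg, Real.sin_sub, Real.sin_nat_mul_pi]
      linear_combination (Real.sin ((↑(α * (q:ℤ)):ℝ) * π / N)) ^ 2 * cos_nat_pi_sq m
    have heven : ¬ Odd q := by simp [Nat.not_odd_iff_even.mpr ⟨m, hm⟩]
    rw [ff, if_neg heven]
    simp only [ss]
    rw [hApt i, hApt j, hApt k, hApt l, hBpt i j, hBpt i k, hBpt i l]
    rw [Even.neg_one_pow ⟨m, hm⟩]
    have L := lc_even _ _ _ _ hsin hcos
    linarith [L]
  · -- odd, q = 2*m+1
    have hqr : (q:ℝ) = 2 * m + 1 := by rw [hm]; push_cast; ring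
    have hcosq : Real.cos ((q:ℝ) * π) = -1 := by
      rw [hqr, show (2 * (m:ℝ) + 1) * π = (m:ℝ) * (2 * π) + π by ring]
      exact Real.cos_nat_mul_two_pi_add_pi m
    have hcos : Real.cos ((↑(i * (q:ℤ)):ℝ) * π / N + (↑(j * (q:ℤ)):ℝ) * π / N
        + (↑(k * (q:ℤ)):ℝ) * π / N + (↑(l * (q:ℤ)):ℝ) * π / N) = -1 := by
      rcases hargS with h | h <;> rw [h]
      · exact hcosq
      · rw [Real.cos_neg]; exact hcosq
    have hApt : ∀ α : ℤ, Real.sin ((((n:ℤ) - α : ℤ):ℝ) * q * π / N) ^ 2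
        = Real.cos ((↑(α * (q:ℤ)):ℝ) * π / N) ^ 2 := by
      intro α
      have harg : (((n:ℤ) - α : ℤ):ℝ) * q * π / N
          = (m:ℝ) * π + (π / 2 - (↑(α * (q:ℤ)):ℝ) * π / N) := by
        push_cast
        rw [hqr, hNr]
        field_simp
        ring
      rw [harg, Real.sin_add, Real.sin_nat_mul_pi, Real.sin_pi_div_two_sub,
        Real.cos_pi_div_two_sub]
      linear_combination (Real.cos ((↑(α * (q:ℤ)):ℝ) * π / N)) ^ 2 * cos_nat_pi_sq m
    rw [ff, if_pos ⟨m, hm⟩]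
    simp only [cc]
    rw [hApt i, hApt j, hApt k, hApt l, hBpt i j, hBpt i k, hBpt i l]
    rw [Odd.neg_one_pow ⟨m, hm⟩]
    have L := lc_odd _ _ _ _ hsin hcos
    linarith [L]

theorem psi_explicit_solution_asymmetric_vanishes (N : ℕ) (hN4 : 4 ∣ N) (hN8 : 8 ≤ N)
    (b1 : ℝ) (hb1 : b1 ≠ 0) (i j k l : ℤ)
    (hi : -((N : ℤ) / 2) + 1 ≤ i ∧ i ≤ (N : ℤ) / 2 - 1)
    (hj : -((N : ℤ) / 2) + 1 ≤ j ∧ j ≤ (N : ℤ) / 2 - 1)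
    (hk : -((N : ℤ) / 2) + 1 ≤ k ∧ k ≤ (N : ℤ) / 2 - 1)
    (hl : -((N : ℤ) / 2) + 1 ≤ l ∧ l ≤ (N : ℤ) / 2 - 1)
    (hsum : i + j + k + l = (N : ℤ) ∨ i + j + k + l = -(N : ℤ)) :
    psi N (bsol N b1) i j k l = 0 := by
  obtain ⟨c4, hc4⟩ := hN4
  have hNn : N = 2 * (N / 2) := by omega
  have hn1 : 1 ≤ N / 2 := by omega
  have hN2 : 2 ≤ N := by omega
  have hN0 : (N:ℝ) ≠ 0 := Nat.cast_ne_zero.mpr (by omega)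
  have hNr : (N:ℝ) = 2 * ((N/2 : ℕ) : ℝ) := by exact_mod_cast congrArg (Nat.cast : ℕ → ℝ) hNn
  have hNZ : (N:ℤ) = 2 * ((N/2 : ℕ) : ℤ) := by exact_mod_cast congrArg (Nat.cast : ℕ → ℤ) hNn
  have hIZ : (N:ℤ) / 2 = ((N/2 : ℕ) : ℤ) := by omega
  obtain ⟨hi1, hi2⟩ := hi
  obtain ⟨hj1, hj2⟩ := hj
  obtain ⟨hk1, hk2⟩ := hk
  obtain ⟨hl1, hl2⟩ := hl
  rw [hIZ] at hi1 hi2 hj1 hj2 hk1 hk2 hl1 hl2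
  set F : ℕ → ℝ := fun q => (-1:ℝ)^q * ff N i j k l q / Real.sin ((q:ℝ) * π / N) ^ 2 with hF
  -- the full-range sum vanishes
  have hT : ∑ q ∈ Finset.Ico 1 N, F q = 0 := by
    have hpointdiv : ∀ q ∈ Finset.Ico 1 N, F q
        = 1/4 * (Real.sin (((((N/2:ℕ):ℤ) - i : ℤ):ℝ) * q * π / N) ^ 2 / Real.sin ((q:ℝ) * π / N) ^ 2
          + Real.sin (((((N/2:ℕ):ℤ) - j : ℤ):ℝ) * q * π / N) ^ 2 / Real.sin ((q:ℝ) * π / N) ^ 2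
          + Real.sin (((((N/2:ℕ):ℤ) - k : ℤ):ℝ) * q * π / N) ^ 2 / Real.sin ((q:ℝ) * π / N) ^ 2
          + Real.sin (((((N/2:ℕ):ℤ) - l : ℤ):ℝ) * q * π / N) ^ 2 / Real.sin ((q:ℝ) * π / N) ^ 2
          - Real.sin (((i + j : ℤ):ℝ) * q * π / N) ^ 2 / Real.sin ((q:ℝ) * π / N) ^ 2
          - Real.sin (((i + k : ℤ):ℝ) * q * π / N) ^ 2 / Real.sin ((q:ℝ) * π / N) ^ 2
          - Real.sin (((i + l : ℤ):ℝ) * q * π / N) ^ 2 / Real.sin ((q:ℝ) * π / N) ^ 2) := by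
      intro q hq
      simp only [hF]
      linear_combination (point_q N (N/2) hNn hn1 i j k l hsum q) / (4 * Real.sin ((q:ℝ) * π / N) ^ 2)
    rw [Finset.sum_congr rfl hpointdiv, ← Finset.mul_sum]
    simp only [Finset.sum_sub_distrib, Finset.sum_add_distrib]
    rw [Hint N hN2 (((N/2:ℕ):ℤ) - i) (by omega), Hint N hN2 (((N/2:ℕ):ℤ) - j) (by omega),
      Hint N hN2 (((N/2:ℕ):ℤ) - k) (by omega), Hint N hN2 (((N/2:ℕ):ℤ) - l) (by omega),
      Hint N hN2 (i + j) (by omega), Hint N hN2 (i + k) (by omega), Hint N hN2 (i + l) (by omega)]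
    have ha1 : (((((N/2:ℕ):ℤ) - i).natAbs : ℝ)) = ((N/2:ℕ):ℝ) - (i:ℝ) := by
      rw [Nat.cast_natAbs, abs_of_nonneg (by omega : (0:ℤ) ≤ ((N/2:ℕ):ℤ) - i), Int.cast_sub, Int.cast_natCast]
    have ha2 : (((((N/2:ℕ):ℤ) - j).natAbs : ℝ)) = ((N/2:ℕ):ℝ) - (j:ℝ) := by
      rw [Nat.cast_natAbs, abs_of_nonneg (by omega : (0:ℤ) ≤ ((N/2:ℕ):ℤ) - j), Int.cast_sub, Int.cast_natCast]
    have ha3 : (((((N/2:ℕ):ℤ) - k).natAbs : ℝ)) = ((N/2:ℕ):ℝ) - (k:ℝ) := by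
      rw [Nat.cast_natAbs, abs_of_nonneg (by omega : (0:ℤ) ≤ ((N/2:ℕ):ℤ) - k), Int.cast_sub, Int.cast_natCast]
    have ha4 : (((((N/2:ℕ):ℤ) - l).natAbs : ℝ)) = ((N/2:ℕ):ℝ) - (l:ℝ) := by
      rw [Nat.cast_natAbs, abs_of_nonneg (by omega : (0:ℤ) ≤ ((N/2:ℕ):ℤ) - l), Int.cast_sub, Int.cast_natCast]
    rw [ha1, ha2, ha3, ha4]
    rcases hsum with hs | hs
    · have hp1 : (((i + j).natAbs : ℝ)) = (i:ℝ) + (j:ℝ) := by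
        rw [Nat.cast_natAbs, abs_of_nonneg (by omega : (0:ℤ) ≤ i + j)]; push_cast; ring
      have hp2 : (((i + k).natAbs : ℝ)) = (i:ℝ) + (k:ℝ) := by
        rw [Nat.cast_natAbs, abs_of_nonneg (by omega : (0:ℤ) ≤ i + k)]; push_cast; ring
      have hp3 : (((i + l).natAbs : ℝ)) = (i:ℝ) + (l:ℝ) := by
        rw [Nat.cast_natAbs, abs_of_nonneg (by omega : (0:ℤ) ≤ i + l)]; push_cast; ring
      have hrr : (i:ℝ) + j + k + l = 2 * ((N/2:ℕ):ℝ) := by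
        have h := congrArg (Int.cast : ℤ → ℝ) hs
        push_cast at h
        rw [hNr] at h
        exact h
      rw [hp1, hp2, hp3, hNr]
      linear_combination (-(1/2) * (((N/2:ℕ):ℝ) - i)) * hrr
    · have hp1 : (((i + j).natAbs : ℝ)) = -((i:ℝ) + (j:ℝ)) := by
        rw [Nat.cast_natAbs, abs_of_nonpos (by omega : i + j ≤ 0)]; push_cast; ring
      have hp2 : (((i + k).natAbs : ℝ)) = -((i:ℝ) + (k:ℝ)) := by
        rw [Nat.cast_natAbs, abs_of_nonpos (by omega : i + k ≤ 0)]; push_cast; ring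
      have hp3 : (((i + l).natAbs : ℝ)) = -((i:ℝ) + (l:ℝ)) := by
        rw [Nat.cast_natAbs, abs_of_nonpos (by omega : i + l ≤ 0)]; push_cast; ring
      have hrr : (i:ℝ) + j + k + l = -(2 * ((N/2:ℕ):ℝ)) := by
        have h := congrArg (Int.cast : ℤ → ℝ) hs
        push_cast at h
        rw [hNr] at h
        exact h
      rw [hp1, hp2, hp3, hNr]
      linear_combination ((1/2) * (((N/2:ℕ):ℝ) + i)) * hrr
  -- reflection
  have hrefl : ∑ q ∈ Finset.Ico (N/2+1) N, F q = ∑ q ∈ Finset.Ico 1 (N/2), F q := by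
    refine Finset.sum_nbij' (fun q => N - q) (fun q => N - q) ?_ ?_ ?_ ?_ ?_
    · intro a ha; simp only [Finset.mem_Ico] at ha ⊢; omega
    · intro a ha; simp only [Finset.mem_Ico] at ha ⊢; omega
    · intro a ha; simp only [Finset.mem_Ico] at ha; show N - (N - a) = a; omega
    · intro a ha; simp only [Finset.mem_Ico] at ha; show N - (N - a) = a; omega
    · intro q hq
      rw [Finset.mem_Ico] at hq
      have hqN : q ≤ N := by omega
      simp only [hF]
      rw [ff_reflect N (N/2) hNn hn1 i j k l hsum q hqN]
      have hsin : Real.sin ((↑(N - q):ℝ) * π / N) = Real.sin ((q:ℝ) * π / N) := by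
        rw [Nat.cast_sub hqN, show ((N:ℝ) - q) * π / N = π - (q:ℝ) * π / N by
          field_simp, Real.sin_pi_sub]
      have hsgn : (-1:ℝ)^(N - q) = (-1:ℝ)^q := by
        have h1 : (-1:ℝ)^(N-q) * (-1:ℝ)^q = 1 := by
          rw [← pow_add, Nat.sub_add_cancel hqN]
          exact Even.neg_one_pow ⟨N/2, by omega⟩
        have h2 : (-1:ℝ)^q * (-1:ℝ)^q = 1 := by
          rw [← pow_add]; exact Even.neg_one_pow ⟨q, rfl⟩
        have hne : (-1:ℝ)^q ≠ 0 := pow_ne_zero _ (by norm_num)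
        exact mul_right_cancel₀ hne (h1.trans h2.symm)
      rw [hsin, hsgn]
  -- half-range assembly
  unfold psi
  rw [neg_eq_zero]
  have hstep1 : ∑ q : Fin (N/2), (-1:ℝ)^((q:ℕ)+1) * bsol N b1 q * ff N i j k l ((q:ℕ)+1)
      = ∑ q ∈ Finset.range (N/2), (-1:ℝ)^(q+1)
        * (if q + 1 = N/2 then b1 / 2 * Real.sin (π/N) ^ 2
           else b1 * Real.sin (π/N) ^ 2 / Real.sin (((q:ℝ)+1) * π / N) ^ 2)
        * ff N i j k l (q+1) := by
    rw [← Fin.sum_univ_eq_sum_range (fun q => (-1:ℝ)^(q+1)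
        * (if q + 1 = N/2 then b1 / 2 * Real.sin (π/N) ^ 2
           else b1 * Real.sin (π/N) ^ 2 / Real.sin (((q:ℝ)+1) * π / N) ^ 2)
        * ff N i j k l (q+1)) (N/2)]
    exact Finset.sum_congr rfl fun q _ => by simp only [bsol]
  rw [hstep1]
  have hterm : ∀ q ∈ Finset.range (N/2), (-1:ℝ)^(q+1)
        * (if q + 1 = N/2 then b1 / 2 * Real.sin (π/N) ^ 2
           else b1 * Real.sin (π/N) ^ 2 / Real.sin (((q:ℝ)+1) * π / N) ^ 2)
        * ff N i j k l (q+1)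
      = b1 * Real.sin (π/N) ^ 2 * (F (q+1) - (if q = N/2 - 1 then 2⁻¹ * F (N/2) else 0)) := by
    intro q hq
    rw [Finset.mem_range] at hq
    by_cases hc : q + 1 = N/2
    · rw [if_pos hc, if_pos (by omega), hc]
      simp only [hF]
      have hsin1 : Real.sin ((↑(N/2):ℝ) * π / N) = 1 := by
        rw [show ((N/2:ℕ):ℝ) * π / N = π / 2 by
          rw [hNr]
          have hn0 : ((N/2:ℕ):ℝ) ≠ 0 := Nat.cast_ne_zero.mpr (by omega)
          field_simp]
        exact Real.sin_pi_div_two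
      rw [hsin1]
      ring
    · rw [if_neg hc, if_neg (by omega)]
      simp only [hF]
      push_cast
      ring
  rw [Finset.sum_congr rfl hterm, ← Finset.mul_sum, Finset.sum_sub_distrib,
    Finset.sum_ite_eq' (Finset.range (N/2)) (N/2 - 1) (fun _ => 2⁻¹ * F (N/2)),
    if_pos (by rw [Finset.mem_range]; omega)]
  have h3 : ∑ q ∈ Finset.range (N/2), F (q+1) = ∑ q ∈ Finset.Ico 1 (N/2+1), F q := by
    rw [Finset.sum_Ico_eq_sum_range]
    simp only [Nat.add_sub_cancel]
    exact Finset.sum_congr rfl fun q _ => by rw [Nat.add_comm 1 q]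
  rw [h3]
  have hs := Finset.sum_Ico_consecutive F (by omega : 1 ≤ N/2+1) (by omega : N/2+1 ≤ N)
  have hm : ∑ q ∈ Finset.Ico 1 (N/2+1), F q = ∑ q ∈ Finset.Ico 1 (N/2), F q + F (N/2) :=
    Finset.sum_Ico_succ_top (by omega) F
  have hfin : ∑ q ∈ Finset.Ico 1 (N/2+1), F q - 2⁻¹ * F (N/2) = 0 := by
    have h2 : ∑ q ∈ Finset.Ico 1 (N/2+1), F q + ∑ q ∈ Finset.Ico 1 (N/2), F q = 0 := by
      rw [← hrefl, hs]
      exact hT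
    linarith [h2, hm]
  rw [hfin, mul_zero]


end Helpers
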